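/- Let h ≥ 1 be an integer and a > 0, ξ ≠ 0, f₀ ≠ 0 real numbers. If u ∈ 𝒮(ℝ) satisfies (1 + f₀²)·(−u''(t) + a²ξ²t^(2h)u(t)) − (1 − f₀²)·h·a·ξ·t^(h−1)·u(t) = 0 for all t ∈ ℝ, then u = 0. -/

import Mathlib

open MeasureTheory Filter Complex Set Topology

lemma arith_ge (X Y W c r : ℝ) (hX : 0 ≤ X) (hY : 0 ≤ Y) (hc : |c| < 1) (hr : |r| ≤ X * Y) :
    (1 - |c|) * (W^2 * Y^2) ≤ X^2 + W^2 * Y^2 + 2*c*W*r := by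
  have h1 : -(2*c*W*r) ≤ 2 * (|c| * (|W| * |r|)) := by
    have e1 : |2*c*W*r| = 2 * (|c| * (|W| * |r|)) := by
      rw [abs_mul, abs_mul, abs_mul]
      norm_num
      ring
    calc -(2*c*W*r) ≤ |2*c*W*r| := neg_le_abs _
    _ = _ := e1
  have h2 : |c| * (|W| * |r|) ≤ |c| * (|W| * (X * Y)) := by
    have := mul_le_mul_of_nonneg_left hr (abs_nonneg W)
    exact mul_le_mul_of_nonneg_left this (abs_nonneg c)
  have h3 : 2 * (|c| * (|W| * (X * Y))) ≤ X^2 + |c|^2 * (|W|^2 * Y^2) := by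
    nlinarith [sq_nonneg (X - |c| * |W| * Y), abs_nonneg c, abs_nonneg W]
  have h4 : |c|^2 * (|W|^2 * Y^2) ≤ |c| * (|W|^2 * Y^2) := by
    have e3 : |c|^2 ≤ |c| := by nlinarith [abs_nonneg c, hc.le]
    exact mul_le_mul_of_nonneg_right e3 (by positivity)
  have h5 : |W|^2 = W^2 := _root_.sq_abs W
  rw [h5] at h3 h4
  linarith [h1, h2, h3, h4]

lemma arith_bound (X Y W c r M C₁ C₂ : ℝ) (hX : 0 ≤ X) (hY : 0 ≤ Y)
    (h1 : X ≤ M) (h2 : W^2 * Y ≤ C₂) (h3 : |W| * Y ≤ C₁) (hr : |r| ≤ X * Y) :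
    |X^2 + W^2 * Y^2 + 2*c*W*r| ≤ C₂ * Y + (M + 2 * |c| * C₁) * X := by
  have e0 : 0 ≤ |c| := abs_nonneg c
  have e1 : X^2 ≤ M * X := by nlinarith [mul_nonneg (sub_nonneg.mpr h1) hX]
  have e2 : W^2 * Y^2 ≤ C₂ * Y := by nlinarith [sq_nonneg W]
  have e3 : |2*c*W*r| ≤ 2 * |c| * C₁ * X := by
    have a1 : |2*c*W*r| = 2 * (|c| * (|W| * |r|)) := by
      rw [abs_mul, abs_mul, abs_mul]; norm_num; ring
    have a2 : |W| * |r| ≤ |W| * (X * Y) := mul_le_mul_of_nonneg_left hr (abs_nonneg W)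
    have a3 : |W| * (X * Y) = (|W| * Y) * X := by ring
    have a4 : (|W| * Y) * X ≤ C₁ * X := mul_le_mul_of_nonneg_right h3 hX
    calc |2*c*W*r| = 2 * (|c| * (|W| * |r|)) := a1
    _ ≤ 2 * (|c| * (C₁ * X)) := by
        have := a2.trans (a3.le.trans a4)
        nlinarith [e0]
    _ = 2 * |c| * C₁ * X := by ring
  have t0 : 0 ≤ W^2 * Y^2 := by positivity
  have t1 : 0 ≤ X^2 := sq_nonneg X
  rw [abs_le]
  constructor <;> nlinarith [abs_le.mp e3]

lemma arith_F (X Y W c r M C₁ : ℝ) (hX : 0 ≤ X) (hY : 0 ≤ Y)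
    (h1 : X ≤ M) (h3 : |W| * Y ≤ C₁) (hr : |r| ≤ X * Y) :
    |r| + |c| * |W| * Y^2 ≤ (M + |c| * C₁) * Y := by
  have e0 : 0 ≤ |c| := abs_nonneg c
  have a1 : |r| ≤ M * Y := hr.trans (mul_le_mul_of_nonneg_right h1 hY)
  have a2 : |c| * |W| * Y^2 = |c| * ((|W| * Y) * Y) := by ring
  have a3 : |c| * ((|W| * Y) * Y) ≤ |c| * (C₁ * Y) := by
    have := mul_le_mul_of_nonneg_right h3 hY
    exact mul_le_mul_of_nonneg_left this e0
  nlinarith [a1, a3]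

theorem aux_energy (w w' : ℝ → ℝ) (c : ℝ) (hclt : |c| < 1) (u : SchwartzMap ℝ ℂ)
    (hw : ∀ t, HasDerivAt w (w' t) t)
    (C₁ C₂ : ℝ) (hb1 : ∀ t, |w t| * ‖u t‖ ≤ C₁) (hb2 : ∀ t, (w t)^2 * ‖u t‖ ≤ C₂)
    (hkey : ∀ t, deriv (deriv ⇑u) t = ((((w t)^2 - c * w' t) : ℝ) : ℂ) * u t) :
    ∀ t, (w t)^2 * Complex.normSq (u t) = 0 := by
  have hd1 : ∀ t : ℝ, HasDerivAt (⇑u) (deriv (⇑u) t) t := fun t =>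
    (u.differentiable.differentiableAt).hasDerivAt
  have hsm' : ContDiff ℝ (⊤:ℕ∞) (deriv ⇑u) := by simpa using (u.smooth ⊤).iterate_deriv 1
  have hd2 : ∀ t : ℝ, HasDerivAt (deriv ⇑u) (deriv (deriv ⇑u) t) t := fun t =>
    ((hsm'.differentiable (by simp)).differentiableAt).hasDerivAt
  set G : ℝ → ℝ := fun t => Complex.normSq (deriv ⇑u t) + (w t)^2 * Complex.normSq (u t)
      + (2*c*(w t)) * (deriv ⇑u t * star (u t)).re with hGdef
  set F : ℝ → ℝ := fun t =>
      (deriv ⇑u t * star (u t) + ((c * w t : ℝ) : ℂ) * (u t * star (u t))).re with hFdef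
  -- auxiliary bounds
  have habs : ∀ t : ℝ, |(deriv ⇑u t * star (u t)).re| ≤ ‖deriv ⇑u t‖ * ‖u t‖ := by
    intro t
    calc |(deriv ⇑u t * star (u t)).re| ≤ ‖deriv ⇑u t * star (u t)‖ := Complex.abs_re_le_norm _
    _ = ‖deriv ⇑u t‖ * ‖u t‖ := by rw [norm_mul, norm_star]
  have hC₁ : 0 ≤ C₁ := le_trans (by positivity) (hb1 0)
  -- derivative of F is G
  have hF : ∀ t : ℝ, HasDerivAt F (G t) t := by
    intro t
    have hK : HasDerivAt (fun s => deriv ⇑u s * star (u s) + ((c * w s : ℝ) : ℂ) * (u s * star (u s)))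
        ((deriv (deriv ⇑u) t * star (u t) + deriv ⇑u t * star (deriv ⇑u t))
          + (((c * w' t : ℝ) : ℂ) * (u t * star (u t))
            + ((c * w t : ℝ) : ℂ) * (deriv (⇑u) t * star (u t) + u t * star (deriv (⇑u) t)))) t :=
      ((hd2 t).mul (hd1 t).star).add
        ((Complex.ofRealCLM.hasFDerivAt.comp_hasDerivAt t ((hw t).const_mul c)).mul
          ((hd1 t).mul (hd1 t).star))
    have h2 := Complex.reCLM.hasFDerivAt.comp_hasDerivAt t hK
    have h3 : HasDerivAt F (((deriv (deriv ⇑u) t * star (u t) + deriv ⇑u t * star (deriv ⇑u t))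
          + (((c * w' t : ℝ) : ℂ) * (u t * star (u t))
            + ((c * w t : ℝ) : ℂ) * (deriv (⇑u) t * star (u t) + u t * star (deriv (⇑u) t)))).re) t := by
      simpa only [Function.comp_def, Complex.reCLM_apply] using h2
    convert h3 using 1
    rw [hkey t]
    simp only [hGdef, Complex.add_re, Complex.mul_re, Complex.mul_im, Complex.normSq_apply,
      Complex.star_def, Complex.conj_re, Complex.conj_im, Complex.ofReal_re, Complex.ofReal_im]
    ring
  -- continuity of G
  have hwcont : Continuous w := continuous_iff_continuousAt.mpr fun t => (hw t).continuousAt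
  have hGcont : Continuous G := by
    apply Continuous.add
    apply Continuous.add
    · exact Complex.continuous_normSq.comp hsm'.continuous
    · exact (hwcont.pow 2).mul (Complex.continuous_normSq.comp u.continuous)
    · exact ((continuous_const.mul hwcont)).mul
        (Complex.continuous_re.comp ((hsm'.continuous).mul (continuous_star.comp u.continuous)))
  -- integrability of G
  set u1 : SchwartzMap ℝ ℂ := SchwartzMap.derivCLM ℝ ℂ u with hu1def
  have hu1 : ∀ t, u1 t = deriv (⇑u) t := fun t => by simp [hu1def, SchwartzMap.derivCLM_apply]
  set M1 : ℝ := SchwartzMap.seminorm ℝ 0 0 u1 with hM1def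
  have hM1 : ∀ t : ℝ, ‖deriv (⇑u) t‖ ≤ M1 := fun t => by
    rw [← hu1 t]; exact SchwartzMap.norm_le_seminorm ℝ u1 t
  have hnormSq : ∀ z : ℂ, Complex.normSq z = ‖z‖^2 := fun z => by
    rw [Complex.normSq_eq_norm_sq]
  have hGbound : ∀ t : ℝ, ‖G t‖ ≤ C₂ * ‖u t‖ + (M1 + 2 * |c| * C₁) * ‖deriv (⇑u) t‖ := by
    intro t
    rw [Real.norm_eq_abs]
    simp only [hGdef, hnormSq]
    exact arith_bound _ _ _ _ _ _ _ _ (norm_nonneg _) (norm_nonneg _) (hM1 t) (hb2 t) (hb1 t) (habs t)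
  have hGint : Integrable G volume := by
    apply Integrable.mono' (((u.integrable.norm).const_mul C₂).add
      (((u1.integrable.norm).const_mul (M1 + 2 * |c| * C₁))))
      hGcont.aestronglyMeasurable
    filter_upwards with t
    simpa [hu1 t] using hGbound t
  -- nonnegativity and lower bound
  have hGge : ∀ t : ℝ, (1 - |c|) * ((w t)^2 * Complex.normSq (u t)) ≤ G t := by
    intro t
    simp only [hGdef, hnormSq]
    exact arith_ge _ _ _ _ _ (norm_nonneg _) (norm_nonneg _) hclt (habs t)
  have hGnn : ∀ t : ℝ, 0 ≤ G t := by
    intro t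
    refine le_trans ?_ (hGge t)
    have h0 : 0 ≤ 1 - |c| := by linarith
    exact mul_nonneg h0 (mul_nonneg (sq_nonneg _) (Complex.normSq_nonneg _))
  -- limits of F at ±∞
  have hFbound : ∀ t : ℝ, ‖F t‖ ≤ (M1 + |c| * C₁) * ‖u t‖ := by
    intro t
    rw [Real.norm_eq_abs]
    simp only [hFdef]
    have key : |(deriv ⇑u t * star (u t) + ((c * w t : ℝ) : ℂ) * (u t * star (u t))).re|
        ≤ |(deriv ⇑u t * star (u t)).re| + |c| * |w t| * Complex.normSq (u t) := by
      rw [Complex.add_re]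
      refine le_trans (abs_add_le _ _) (add_le_add_right (le_of_eq ?_) _)
      have h0 : ((c * w t : ℝ) : ℂ) * (u t * star (u t))
          = ((c * (w t * Complex.normSq (u t)) : ℝ) : ℂ) := by
        simp only [Complex.star_def, Complex.mul_conj]
        push_cast
        ring
      rw [h0, Complex.ofReal_re, abs_mul, abs_mul,
        _root_.abs_of_nonneg (Complex.normSq_nonneg (u t))]
      ring
    refine le_trans key ?_
    rw [hnormSq]
    exact arith_F _ _ _ _ _ _ _ (norm_nonneg _) (norm_nonneg _) (hM1 t) (hb1 t) (habs t)
  have hnormu_top : Tendsto (fun t => ‖u t‖) atTop (𝓝 0) := by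
    have h := zero_at_infty u
    rw [cocompact_eq_atBot_atTop] at h
    simpa using (h.mono_left le_sup_right).norm
  have hnormu_bot : Tendsto (fun t => ‖u t‖) atBot (𝓝 0) := by
    have h := zero_at_infty u
    rw [cocompact_eq_atBot_atTop] at h
    simpa using (h.mono_left le_sup_left).norm
  have hFtop : Tendsto F atTop (𝓝 0) :=
    squeeze_zero_norm hFbound (by simpa using hnormu_top.const_mul (M1 + |c| * C₁))
  have hFbot : Tendsto F atBot (𝓝 0) :=
    squeeze_zero_norm hFbound (by simpa using hnormu_bot.const_mul (M1 + |c| * C₁))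
  -- FTC
  have hIoi : ∫ t in Set.Ioi (0:ℝ), G t = 0 - F 0 :=
    integral_Ioi_of_hasDerivAt_of_tendsto' (fun x _ => hF x) hGint.integrableOn hFtop
  have hIic : ∫ t in Set.Iic (0:ℝ), G t = F 0 - 0 :=
    integral_Iic_of_hasDerivAt_of_tendsto' (fun x _ => hF x) hGint.integrableOn hFbot
  have htot : ∫ t, G t = 0 := by
    rw [← intervalIntegral.integral_Iic_add_Ioi hGint.integrableOn hGint.integrableOn, hIic, hIoi]
    ring
  have hGae : G =ᵐ[volume] 0 := (integral_eq_zero_iff_of_nonneg hGnn hGint).mp htot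
  have hGzero : G = 0 := (hGcont.ae_eq_iff_eq volume continuous_const).mp hGae
  intro t
  have h1 : G t = 0 := by rw [hGzero]; rfl
  have h2 := hGge t
  rw [h1] at h2
  have h3 : 0 < 1 - |c| := by linarith
  have h4 : 0 ≤ (w t)^2 * Complex.normSq (u t) := mul_nonneg (sq_nonneg _) (Complex.normSq_nonneg _)
  nlinarith


/-- Let `h ≥ 1` be an integer and `a > 0`, `ξ ≠ 0`, `f₀ ≠ 0` real numbers.
If `u ∈ 𝒮(ℝ)` satisfies
`(1 + f₀²)·(−u''(t) + a²ξ²t^(2h)u(t)) − (1 − f₀²)·h·a·ξ·t^(h−1)·u(t) = 0` for all `t ∈ ℝ`,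
then `u = 0`. -/
theorem stmt_5 (h : ℕ) (hh : 1 ≤ h) (a ξ f₀ : ℝ) (ha : 0 < a) (hξ : ξ ≠ 0) (hf₀ : f₀ ≠ 0)
    (u : SchwartzMap ℝ ℂ)
    (hu : ∀ t : ℝ,
      (1 + (f₀ : ℂ) ^ 2) * (-(deriv (deriv (⇑u)) t) + (a : ℂ) ^ 2 * (ξ : ℂ) ^ 2 * (t : ℂ) ^ (2 * h) * u t)
        - (1 - (f₀ : ℂ) ^ 2) * (h : ℂ) * (a : ℂ) * (ξ : ℂ) * (t : ℂ) ^ (h - 1) * u t = 0) :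
    u = 0 := by
  have hpos : (0:ℝ) < 1 + f₀^2 := by positivity
  have hf2 : (0:ℝ) < f₀^2 := by positivity
  have hclt : |(1 - f₀^2)/(1 + f₀^2)| < 1 := by
    rw [abs_div, _root_.abs_of_pos hpos, div_lt_one hpos, abs_lt]
    constructor <;> nlinarith
  have hne : (1 + (f₀:ℂ)^2) ≠ 0 := by
    have h0 : ((1 + f₀^2 : ℝ) : ℂ) ≠ 0 := Complex.ofReal_ne_zero.mpr (ne_of_gt hpos)
    convert h0 using 1
    push_cast
    ring
  have hw : ∀ t : ℝ, HasDerivAt (fun s : ℝ => a * ξ * s ^ h) (a * ξ * ((h:ℝ) * t^(h-1))) t :=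
    fun t => (hasDerivAt_pow h t).const_mul (a*ξ)
  have hkey : ∀ t : ℝ, deriv (deriv ⇑u) t
      = ((((a * ξ * t ^ h)^2 - ((1 - f₀^2)/(1 + f₀^2)) * (a * ξ * ((h:ℝ) * t^(h-1)))) : ℝ) : ℂ) * u t := by
    intro t
    have H := hu t
    rw [sub_eq_zero] at H
    push_cast
    field_simp
    linear_combination -H
  have hb1 : ∀ t : ℝ, |a * ξ * t^h| * ‖u t‖ ≤ |a*ξ| * SchwartzMap.seminorm ℝ h 0 u := by
    intro t
    have e1 : |a * ξ * t^h| = |a*ξ| * ‖t‖^h := by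
      rw [abs_mul, _root_.abs_pow, Real.norm_eq_abs]
    rw [e1, mul_assoc]
    exact mul_le_mul_of_nonneg_left (SchwartzMap.norm_pow_mul_le_seminorm ℝ u h t) (abs_nonneg _)
  have hb2 : ∀ t : ℝ, (a * ξ * t^h)^2 * ‖u t‖ ≤ (a*ξ)^2 * SchwartzMap.seminorm ℝ (2*h) 0 u := by
    intro t
    have e2 : (a * ξ * t^h)^2 = (a*ξ)^2 * ‖t‖^(2*h) := by
      rw [mul_pow]
      congr 1
      rw [← _root_.sq_abs (t^h), _root_.abs_pow, ← pow_mul, mul_comm h 2, Real.norm_eq_abs]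
    rw [e2, mul_assoc]
    exact mul_le_mul_of_nonneg_left (SchwartzMap.norm_pow_mul_le_seminorm ℝ u (2*h) t) (sq_nonneg _)
  have hz := aux_energy (fun s : ℝ => a * ξ * s ^ h) (fun s : ℝ => a * ξ * ((h:ℝ) * s^(h-1)))
    ((1 - f₀^2)/(1 + f₀^2)) hclt u hw _ _ hb1 hb2 hkey
  have huz : ∀ t : ℝ, t ≠ 0 → u t = 0 := by
    intro t ht
    have hz1 : (a * ξ * t^h)^2 * Complex.normSq (u t) = 0 := by simpa using hz t
    have hwne : a * ξ * t^h ≠ 0 := mul_ne_zero (mul_ne_zero (ne_of_gt ha) hξ) (pow_ne_zero _ ht)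
    rcases mul_eq_zero.mp hz1 with h0 | h0
    · exact absurd h0 (pow_ne_zero _ hwne)
    · exact Complex.normSq_eq_zero.mp h0
  have hfun : ⇑u = fun _ : ℝ => (0:ℂ) :=
    Continuous.ext_on (dense_compl_singleton 0) u.continuous continuous_const
      (fun t ht => huz t (Set.mem_compl_singleton_iff.mp ht))
  ext x
  rw [congrFun hfun x]
  simp
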